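/- arXiv:2209.07149 — 4 statements merged into one kernel-verified Lean document; each statement's English description precedes it below -/
import Mathlib

section
/- For every real number z > 1, |z³·(e^{z²}·erfc(z) − (1/(2z) − 1/(4z³)))| ≤ 3/(8z²). -/
open Real MeasureTheory Set Filter

/-- The unnormalized complementary error function `erfc z = ∫_z^∞ e^{-s²} ds`. -/
noncomputable def erfc (z : ℝ) : ℝ := ∫ s in Set.Ioi z, Real.exp (-s ^ 2)

lemma exp_neg_sq_hasDerivAt (s : ℝ) :
    HasDerivAt (fun t : ℝ => Real.exp (-t ^ 2)) (Real.exp (-s ^ 2) * (-2 * s)) s := by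
  have h : HasDerivAt (fun t : ℝ => -t ^ 2) (-2 * s) s := by
    simpa using (hasDerivAt_pow 2 s).fun_neg
  simpa using (h.exp)

lemma integrableOn_exp_neg_sq (z : ℝ) :
    IntegrableOn (fun s : ℝ => Real.exp (-s ^ 2)) (Ioi z) := by
  have := integrable_exp_neg_mul_sq (b := 1) one_pos
  simpa using this.integrableOn

lemma integrableOn_mul_exp_neg_sq (z : ℝ) :
    IntegrableOn (fun s : ℝ => s * Real.exp (-s ^ 2)) (Ioi z) := by
  have := integrable_mul_exp_neg_mul_sq (b := 1) one_pos
  simpa using this.integrableOn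

lemma integral_mul_exp_neg_sq (z : ℝ) :
    ∫ s in Ioi z, s * Real.exp (-s ^ 2) = Real.exp (-z ^ 2) / 2 := by
  have hderiv : ∀ x ∈ Ici z, HasDerivAt (fun t : ℝ => -Real.exp (-t ^ 2) / 2)
      (x * Real.exp (-x ^ 2)) x := by
    intro x _
    have := ((exp_neg_sq_hasDerivAt x).neg.div_const 2)
    exact this.congr_deriv (by ring)
  have htend : Tendsto (fun t : ℝ => -Real.exp (-t ^ 2) / 2) atTop (nhds 0) := by
    have h1 : Tendsto (fun t : ℝ => Real.exp (-t ^ 2)) atTop (nhds 0) := by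
      apply Real.tendsto_exp_atBot.comp
      apply tendsto_neg_atBot_iff.mpr
      exact tendsto_pow_atTop (by norm_num)
    have := (h1.neg).div_const 2
    simpa using this
  have := integral_Ioi_of_hasDerivAt_of_tendsto' hderiv (integrableOn_mul_exp_neg_sq z) htend
  rw [this]; ring

lemma integrableOn_exp_div_pow (z : ℝ) (hz : 1 < z) :
    IntegrableOn (fun s : ℝ => 3 / 4 * Real.exp (-s ^ 2) / s ^ 4) (Ioi z) := by
  apply Integrable.mono' (integrableOn_exp_neg_sq z)
  · apply ContinuousOn.aestronglyMeasurable _ measurableSet_Ioi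
    apply ContinuousOn.div
    · exact (continuous_const.mul ((continuous_pow 2).neg.rexp)).continuousOn
    · exact (continuous_pow 4).continuousOn
    · intro x hx
      have : (1:ℝ) < x := lt_trans hz hx
      positivity
  · filter_upwards [ae_restrict_mem measurableSet_Ioi] with x hx
    have hx1 : (1:ℝ) < x := lt_trans hz hx
    have hx4 : (1:ℝ) ≤ x ^ 4 := one_le_pow₀ hx1.le
    rw [Real.norm_eq_abs, abs_of_nonneg (by positivity)]
    rw [div_le_iff₀ (by positivity)]
    nlinarith [Real.exp_pos (-x ^ 2)]

lemma erfc_eq (z : ℝ) (hz : 1 < z) :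
    erfc z = Real.exp (-z ^ 2) * (1 / (2 * z) - 1 / (4 * z ^ 3))
      + ∫ s in Ioi z, 3 / 4 * Real.exp (-s ^ 2) / s ^ 4 := by
  set g : ℝ → ℝ := fun t => Real.exp (-t ^ 2) * (1 / (2 * t) - 1 / (4 * t ^ 3)) with hg
  have hderiv : ∀ x ∈ Ici z, HasDerivAt g
      (-Real.exp (-x ^ 2) + 3 / 4 * Real.exp (-x ^ 2) / x ^ 4) x := by
    intro x hx
    have hx0 : (0:ℝ) < x := lt_of_lt_of_le (lt_trans one_pos hz) hx
    have ha : HasDerivAt (fun t : ℝ => 2 * t) 2 x := by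
      simpa using (hasDerivAt_id x).const_mul 2
    have hb : HasDerivAt (fun t : ℝ => 4 * t ^ 3) (12 * x ^ 2) x := by
      have := (hasDerivAt_pow 3 x).const_mul 4
      exact this.congr_deriv (by ring)
    have hA : HasDerivAt (fun t : ℝ => 1 / (2 * t)) (-(2 : ℝ) / (2 * x) ^ 2) x := by
      have h := ha.inv (by positivity)
      simp only [one_div]
      exact h
    have hB : HasDerivAt (fun t : ℝ => 1 / (4 * t ^ 3)) (-(12 * x ^ 2) / (4 * x ^ 3) ^ 2) x := by
      have h := hb.inv (by positivity)
      simp only [one_div]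
      exact h
    have hp := hA.sub hB
    have hgd := (exp_neg_sq_hasDerivAt x).mul hp
    refine hgd.congr_deriv ?_
    simp only [Pi.sub_apply]
    field_simp
    ring
  have htend : Tendsto g atTop (nhds 0) := by
    have h1 : Tendsto (fun t : ℝ => Real.exp (-t ^ 2)) atTop (nhds 0) := by
      apply Real.tendsto_exp_atBot.comp
      apply tendsto_neg_atBot_iff.mpr
      exact tendsto_pow_atTop (by norm_num)
    have h2 : Tendsto (fun t : ℝ => 1 / (2 * t) - 1 / (4 * t ^ 3)) atTop (nhds 0) := by
      have hA : Tendsto (fun t : ℝ => 1 / (2 * t)) atTop (nhds 0) := by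
        apply Tendsto.div_atTop (tendsto_const_nhds (α := ℝ) (f := atTop))
        exact (tendsto_id.const_mul_atTop two_pos)
      have hB : Tendsto (fun t : ℝ => 1 / (4 * t ^ 3)) atTop (nhds 0) := by
        apply Tendsto.div_atTop (tendsto_const_nhds (α := ℝ) (f := atTop))
        exact ((tendsto_pow_atTop (by norm_num : 3 ≠ 0)).const_mul_atTop (by norm_num))
      simpa using hA.sub hB
    simpa [hg] using h1.mul h2
  have hint1 : IntegrableOn (fun s : ℝ => -Real.exp (-s ^ 2)) (Ioi z) :=
    (integrableOn_exp_neg_sq z).neg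
  have hint2 := integrableOn_exp_div_pow z hz
  have key := integral_Ioi_of_hasDerivAt_of_tendsto' hderiv (hint1.add hint2) htend
  rw [integral_add hint1 hint2] at key
  have hneg : ∫ s in Ioi z, -Real.exp (-s ^ 2) = -erfc z := by
    rw [integral_neg]; rfl
  rw [hneg] at key
  simp only [zero_sub] at key
  unfold g at key
  linarith [key]

/-- For every `z > 1`,
`|z³·(e^{z²}·erfc z − (1/(2z) − 1/(4z³)))| ≤ 3/(8z²)`. -/
theorem abs_erfc_remainder_le (z : ℝ) (hz : 1 < z) :
    |z ^ 3 * (Real.exp (z ^ 2) * erfc z - (1 / (2 * z) - 1 / (4 * z ^ 3)))|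
      ≤ 3 / (8 * z ^ 2) := by
  have hz0 : (0:ℝ) < z := lt_trans one_pos hz
  set R : ℝ := ∫ s in Ioi z, 3 / 4 * Real.exp (-s ^ 2) / s ^ 4 with hR
  have hR0 : 0 ≤ R := by
    apply setIntegral_nonneg measurableSet_Ioi
    intro x hx
    have hx0 : (0:ℝ) < x := lt_trans hz0 hx
    positivity
  have hRle : R ≤ 3 * Real.exp (-z ^ 2) / (8 * z ^ 5) := by
    have hmono : R ≤ ∫ s in Ioi z, 3 / (4 * z ^ 5) * (s * Real.exp (-s ^ 2)) := by
      apply setIntegral_mono_on (integrableOn_exp_div_pow z hz)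
        ((integrableOn_mul_exp_neg_sq z).const_mul _) measurableSet_Ioi
      intro x hx
      have hx0 : (0:ℝ) < x := lt_trans hz0 hx
      have h5 : z ^ 5 ≤ x ^ 5 := pow_le_pow_left₀ hz0.le (le_of_lt hx) 5
      rw [div_le_iff₀ (by positivity)]
      have heq : 3 / (4 * z ^ 5) * (x * Real.exp (-x ^ 2)) * x ^ 4
          = 3 / 4 * Real.exp (-x ^ 2) * (x ^ 5 / z ^ 5) := by
        field_simp
      rw [heq]
      exact le_mul_of_one_le_right (by positivity)
        ((one_le_div (by positivity)).mpr h5)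
    rw [MeasureTheory.integral_const_mul, integral_mul_exp_neg_sq] at hmono
    calc R ≤ 3 / (4 * z ^ 5) * (Real.exp (-z ^ 2) / 2) := hmono
    _ = 3 * Real.exp (-z ^ 2) / (8 * z ^ 5) := by ring
  have hexp : Real.exp (z ^ 2) * Real.exp (-z ^ 2) = 1 := by
    rw [← Real.exp_add]; simp
  have hmain : Real.exp (z ^ 2) * erfc z - (1 / (2 * z) - 1 / (4 * z ^ 3))
      = Real.exp (z ^ 2) * R := by
    rw [erfc_eq z hz, mul_add, ← mul_assoc, hexp, one_mul]
    ring
  rw [hmain, abs_of_nonneg (by positivity)]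
  calc z ^ 3 * (Real.exp (z ^ 2) * R)
      ≤ z ^ 3 * (Real.exp (z ^ 2) * (3 * Real.exp (-z ^ 2) / (8 * z ^ 5))) := by gcongr
    _ = 3 / (8 * z ^ 2) := by
        field_simp
        linear_combination hexp
end

section
/- Let ε > 0 and let V, S : ℝ × ℝ → ℝ be C² on ℝ × (0,∞), with V strictly positive there, and suppose both satisfy the heat equation V_t = (ε/2)·V_xx and S_t = (ε/2)·S_xx on ℝ × (0,∞). Then the function R := S/V satisfies R_t + R_x · (−ε·V_x/V) = (ε/2)·R_xx on ℝ × (0,∞). -/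
open Real Set

lemma aux_deriv_diff {f : ℝ → ℝ} {x : ℝ} (hf : ContDiffAt ℝ 2 f x) :
    DifferentiableAt ℝ (deriv f) x := by
  have h := hf.fderiv_right (m := 1) (by norm_num)
  have h2 : DifferentiableAt ℝ (fun y => fderiv ℝ f y 1) x :=
    (ContinuousLinearMap.apply ℝ ℝ (1 : ℝ)).differentiableAt.comp x (h.differentiableAt one_ne_zero)
  have : (fun y => fderiv ℝ f y 1) = deriv f := by
    funext y; rw [fderiv_apply_one_eq_deriv]
  rwa [this] at h2

lemma aux_slice_x {W : ℝ × ℝ → ℝ} (hW : ContDiffOn ℝ 2 W (Set.univ ×ˢ Set.Ioi (0 : ℝ)))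
    {t : ℝ} (ht : 0 < t) (y : ℝ) : ContDiffAt ℝ 2 (fun y' => W (y', t)) y := by
  have hmem : ((y, t) : ℝ × ℝ) ∈ Set.univ ×ˢ Set.Ioi (0 : ℝ) := ⟨mem_univ _, ht⟩
  have hW' : ContDiffAt ℝ 2 W (y, t) :=
    hW.contDiffAt ((isOpen_univ.prod isOpen_Ioi).mem_nhds hmem)
  exact hW'.comp y (contDiffAt_id.prodMk contDiffAt_const)

lemma aux_slice_t {W : ℝ × ℝ → ℝ} (hW : ContDiffOn ℝ 2 W (Set.univ ×ˢ Set.Ioi (0 : ℝ)))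
    {t : ℝ} (ht : 0 < t) (x : ℝ) : ContDiffAt ℝ 2 (fun s => W (x, s)) t := by
  have hmem : ((x, t) : ℝ × ℝ) ∈ Set.univ ×ˢ Set.Ioi (0 : ℝ) := ⟨mem_univ _, ht⟩
  have hW' : ContDiffAt ℝ 2 W (x, t) :=
    hW.contDiffAt ((isOpen_univ.prod isOpen_Ioi).mem_nhds hmem)
  exact hW'.comp t (contDiffAt_const.prodMk contDiffAt_id)

/-- If `V, S : ℝ × ℝ → ℝ` are C² on `ℝ × (0,∞)`, `V` is strictly positive there, and both
satisfy the heat equation `V_t = (ε/2)·V_xx`, `S_t = (ε/2)·S_xx` there, then `R := S/V`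
satisfies `R_t + R_x·(−ε·V_x/V) = (ε/2)·R_xx` on `ℝ × (0,∞)`. -/
theorem hopf_cole_density (ε : ℝ) (hε : 0 < ε) (V S : ℝ × ℝ → ℝ)
    (hV : ContDiffOn ℝ 2 V (Set.univ ×ˢ Set.Ioi (0 : ℝ)))
    (hS : ContDiffOn ℝ 2 S (Set.univ ×ˢ Set.Ioi (0 : ℝ)))
    (hVpos : ∀ x t : ℝ, 0 < t → 0 < V (x, t))
    (hheatV : ∀ x t : ℝ, 0 < t →
      deriv (fun s => V (x, s)) t
        = ε / 2 * deriv (fun y => deriv (fun y' => V (y', t)) y) x)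
    (hheatS : ∀ x t : ℝ, 0 < t →
      deriv (fun s => S (x, s)) t
        = ε / 2 * deriv (fun y => deriv (fun y' => S (y', t)) y) x)
    (R : ℝ → ℝ → ℝ)
    (hR : ∀ x t : ℝ, R x t = S (x, t) / V (x, t)) :
    ∀ x t : ℝ, 0 < t →
      deriv (fun s => R x s) t
          + deriv (fun y => R y t) x * (-ε * deriv (fun y => V (y, t)) x / V (x, t))
        = ε / 2 * deriv (fun y => deriv (fun y' => R y' t) y) x := by
  intro x t ht
  set f : ℝ → ℝ := fun y => S (y, t) with hf_def
  set g : ℝ → ℝ := fun y => V (y, t) with hg_def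
  have hgpos : ∀ y, 0 < g y := fun y => hVpos y t ht
  have hgne : ∀ y, g y ≠ 0 := fun y => (hgpos y).ne'
  have hfC : ∀ y, ContDiffAt ℝ 2 f y := aux_slice_x hS ht
  have hgC : ∀ y, ContDiffAt ℝ 2 g y := aux_slice_x hV ht
  have hdf : ∀ y, DifferentiableAt ℝ f y := fun y => (hfC y).differentiableAt two_ne_zero
  have hdg : ∀ y, DifferentiableAt ℝ g y := fun y => (hgC y).differentiableAt two_ne_zero
  have hdf' : ∀ y, DifferentiableAt ℝ (deriv f) y := fun y => aux_deriv_diff (hfC y)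
  have hdg' : ∀ y, DifferentiableAt ℝ (deriv g) y := fun y => aux_deriv_diff (hgC y)
  have hdh : DifferentiableAt ℝ (fun s => S (x, s)) t :=
    (aux_slice_t hS ht x).differentiableAt two_ne_zero
  have hdk : DifferentiableAt ℝ (fun s => V (x, s)) t :=
    (aux_slice_t hV ht x).differentiableAt two_ne_zero
  -- R slice in space
  have hRslice : (fun y => R y t) = fun y => f y / g y := funext fun y => hR y t
  have hRx : ∀ y, deriv (fun y' => R y' t) y
      = (deriv f y * g y - f y * deriv g y) / g y ^ 2 := by
    intro y
    rw [hRslice]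
    exact deriv_div (hdf y) (hdg y) (hgne y)
  -- time derivative
  have hRtslice : (fun s => R x s) = fun s => S (x, s) / V (x, s) := funext fun s => hR x s
  have hRt : deriv (fun s => R x s) t
      = (deriv (fun s => S (x, s)) t * V (x, t)
          - S (x, t) * deriv (fun s => V (x, s)) t) / V (x, t) ^ 2 := by
    rw [hRtslice]
    exact deriv_div hdh hdk (hgne x)
  -- second space derivative of R
  have hRderivfun : (fun y => deriv (fun y' => R y' t) y)
      = fun y => (deriv f y * g y - f y * deriv g y) / g y ^ 2 := funext hRx
  have hdN : DifferentiableAt ℝ (fun y => deriv f y * g y - f y * deriv g y) x :=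
    ((hdf' x).mul (hdg x)).sub ((hdf x).mul (hdg' x))
  have hdD : DifferentiableAt ℝ (fun y => g y ^ 2) x := (hdg x).pow 2
  have hRxx : deriv (fun y => deriv (fun y' => R y' t) y) x
      = ((deriv (deriv f) x * g x + deriv f x * deriv g x
            - (deriv f x * deriv g x + f x * deriv (deriv g) x)) * g x ^ 2
          - (deriv f x * g x - f x * deriv g x) * (2 * g x ^ 1 * deriv g x)) / (g x ^ 2) ^ 2 := by
    rw [hRderivfun, deriv_fun_div hdN hdD (pow_ne_zero 2 (hgne x)),
      deriv_fun_sub (f := fun y => deriv f y * g y) (g := fun y => f y * deriv g y) ((hdf' x).mul (hdg x)) ((hdf x).mul (hdg' x)),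
      deriv_fun_mul (hdf' x) (hdg x), deriv_fun_mul (hdf x) (hdg' x),
      (by exact deriv_pow (hdg x) 2 :
        deriv (fun y => g y ^ 2) x = ((2 : ℕ) : ℝ) * g x ^ (2 - 1) * deriv g x)]
    norm_num
  -- heat equations
  have hhS : deriv (fun s => S (x, s)) t = ε / 2 * deriv (deriv f) x := by
    have := hheatS x t ht
    simpa [hf_def] using this
  have hhV : deriv (fun s => V (x, s)) t = ε / 2 * deriv (deriv g) x := by
    have := hheatV x t ht
    simpa [hg_def] using this
  rw [hRt, hRx, hRxx, hhS, hhV]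
  have hgx : g x = V (x, t) := rfl
  have hfx : f x = S (x, t) := rfl
  rw [← hgx, ← hfx]
  have hD : g x ≠ 0 := hgne x
  field_simp
  ring
end

section
/- Let u_a < 0, t > 0, and x < a be real numbers, and let erfc(z) = ∫_z^∞ e^{−s²} ds. If x < a − √(−2 u_a t), then the function ε ↦ erfc((a−x)/√(2tε)) · e^{−u_a/ε} tends to 0 as ε → 0⁺; if a − √(−2 u_a t) < x < a, then this function tends to +∞ as ε → 0⁺. -/
open Real Filter Topology

lemma gauss_integrableOn (z : ℝ) :
    MeasureTheory.IntegrableOn (fun s : ℝ => Real.exp (-s ^ 2)) (Set.Ioi z) := by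
  have := (integrable_exp_neg_mul_sq (by norm_num : (0:ℝ) < 1)).integrableOn (s := Set.Ioi z)
  simpa using this

lemma erfc_nonneg (z : ℝ) : 0 ≤ erfc z :=
  MeasureTheory.setIntegral_nonneg measurableSet_Ioi fun s _ => (Real.exp_nonneg _)

lemma erfc_le (z : ℝ) (hz : 0 < z) : erfc z ≤ Real.exp (-z ^ 2) / z := by
  have hint : MeasureTheory.IntegrableOn (fun s : ℝ => Real.exp (-z * s)) (Set.Ioi z) :=
    exp_neg_integrableOn_Ioi z hz
  have hle : erfc z ≤ ∫ s in Set.Ioi z, Real.exp (-z * s) := by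
    refine MeasureTheory.setIntegral_mono_on (gauss_integrableOn z) hint measurableSet_Ioi ?_
    intro s hs
    have hs' : z < s := hs
    apply Real.exp_le_exp.2
    nlinarith
  have hval : (∫ s in Set.Ioi z, Real.exp (-z * s)) = Real.exp (-z ^ 2) / z := by
    have := MeasureTheory.integral_Ioi_of_hasDerivAt_of_tendsto'
      (f := fun s : ℝ => -Real.exp (-z * s) / z) (f' := fun s : ℝ => Real.exp (-z * s))
      (a := z) (m := 0) ?_ hint ?_
    · rw [this]
      show (0:ℝ) - (-Real.exp (-z * z) / z) = Real.exp (-z ^ 2) / z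
      rw [show -z * z = -z ^ 2 by ring]; ring
    · intro s _
      have h1 : HasDerivAt (fun s : ℝ => -z * s) (-z) s := by
        simpa using (hasDerivAt_id s).const_mul (-z)
      have h2 : HasDerivAt (fun s : ℝ => Real.exp (-z * s)) (Real.exp (-z * s) * (-z)) s :=
        h1.exp
      have h3 := (h2.neg).div_const z
      convert h3 using 1
      · rfl
      · rfl
      · rw [eq_div_iff hz.ne']; ring
    · have h : Tendsto (fun s : ℝ => Real.exp (-z * s)) atTop (𝓝 0) := by
        apply Real.tendsto_exp_atBot.comp
        exact (tendsto_const_mul_atBot_of_neg (by linarith)).2 tendsto_id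
      simpa [neg_div] using (h.div_const z).neg
  linarith

lemma erfc_ge (z : ℝ) (hz : 0 ≤ z) : Real.exp (-(z + 1) ^ 2) ≤ erfc z := by
  have hsub : (Set.Ioc z (z + 1)) ⊆ Set.Ioi z := Set.Ioc_subset_Ioi_self
  have h1 : (∫ s in Set.Ioc z (z + 1), Real.exp (-s ^ 2)) ≤ erfc z := by
    apply MeasureTheory.setIntegral_mono_set (gauss_integrableOn z)
    · filter_upwards with s using Real.exp_nonneg _
    · exact HasSubset.Subset.eventuallyLE hsub
  have h2 : Real.exp (-(z + 1) ^ 2) * (MeasureTheory.volume (Set.Ioc z (z + 1))).toReal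
      ≤ ∫ s in Set.Ioc z (z + 1), Real.exp (-s ^ 2) := by
    rw [mul_comm, ← smul_eq_mul, ← MeasureTheory.measureReal_def]
    apply MeasureTheory.setIntegral_ge_of_const_le measurableSet_Ioc
    · exact (measure_Ioc_lt_top).ne
    · intro s hs
      apply Real.exp_le_exp.2
      have h1 := hs.1
      have h2 := hs.2
      nlinarith
    · exact (gauss_integrableOn z).mono_set hsub
  have hvol : (MeasureTheory.volume (Set.Ioc z (z + 1))).toReal = 1 := by
    simp [Real.volume_Ioc]
  rw [hvol, mul_one] at h2
  linarith

/-- Asymptotics of `ε ↦ erfc((a−x)/√(2tε))·e^{−u_a/ε}` as `ε → 0⁺` for `u_a < 0`, `t > 0`,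
`x < a`: it tends to `0` if `x < a − √(−2·u_a·t)` and to `+∞` if `a − √(−2·u_a·t) < x < a`. -/
theorem tendsto_erfc_mul_exp (u_a t x a : ℝ) (hua : u_a < 0) (ht : 0 < t) (hx : x < a) :
    (x < a - Real.sqrt (-2 * u_a * t) →
      Tendsto (fun ε : ℝ => erfc ((a - x) / Real.sqrt (2 * t * ε)) * Real.exp (-u_a / ε))
        (𝓝[>] 0) (𝓝 0))
    ∧ (a - Real.sqrt (-2 * u_a * t) < x →
      Tendsto (fun ε : ℝ => erfc ((a - x) / Real.sqrt (2 * t * ε)) * Real.exp (-u_a / ε))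
        (𝓝[>] 0) atTop) := by
  set c : ℝ := a - x with hc
  have hc0 : 0 < c := by simp [hc]; linarith
  have hzsq : ∀ ε : ℝ, 0 < ε → (c / Real.sqrt (2 * t * ε)) ^ 2 = c ^ 2 / (2 * t * ε) := by
    intro ε hε
    rw [div_pow, Real.sq_sqrt (by positivity)]
  have hzpos : ∀ ε : ℝ, 0 < ε → 0 < c / Real.sqrt (2 * t * ε) := by
    intro ε hε
    positivity
  constructor
  · intro h
    have hcgt : -2 * u_a * t < c ^ 2 := by
      have : Real.sqrt (-2 * u_a * t) < c := by rw [hc]; linarith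
      exact (Real.sqrt_lt' hc0).1 this
    set δ : ℝ := c ^ 2 / (2 * t) + u_a with hδ
    have hδ0 : 0 < δ := by
      rw [hδ]
      have : -u_a < c ^ 2 / (2 * t) := by
        rw [lt_div_iff₀ (by linarith)]
        nlinarith
      linarith
    -- squeeze between 0 and g ε = √(2tε)/c * exp(-δ/ε)
    have hub : ∀ᶠ ε in 𝓝[>] (0:ℝ),
        erfc (c / Real.sqrt (2 * t * ε)) * Real.exp (-u_a / ε)
          ≤ Real.sqrt (2 * t * ε) / c * Real.exp (-δ / ε) := by
      filter_upwards [self_mem_nhdsWithin] with ε hε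
      have hε : 0 < ε := hε
      have hz := hzpos ε hε
      have h1 := erfc_le _ hz
      have h2 : erfc (c / Real.sqrt (2 * t * ε)) * Real.exp (-u_a / ε)
          ≤ Real.exp (-(c / Real.sqrt (2 * t * ε)) ^ 2) / (c / Real.sqrt (2 * t * ε))
            * Real.exp (-u_a / ε) :=
        mul_le_mul_of_nonneg_right h1 (Real.exp_nonneg _)
      refine h2.trans_eq ?_
      have hs : Real.sqrt (2 * t * ε) ≠ 0 := by positivity
      have e1 : Real.exp (-(c ^ 2 / (2 * t * ε))) * Real.exp (-u_a / ε)
          = Real.exp (-δ / ε) := by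
        rw [← Real.exp_add]; congr 1; rw [hδ]; field_simp; ring
      have e2 : Real.exp (-(c ^ 2 / (2 * t * ε))) / (c / Real.sqrt (2 * t * ε))
            * Real.exp (-u_a / ε)
          = Real.sqrt (2 * t * ε) / c
            * (Real.exp (-(c ^ 2 / (2 * t * ε))) * Real.exp (-u_a / ε)) := by
        field_simp
      rw [hzsq ε hε, e2, e1]
    have hg : Tendsto (fun ε : ℝ => Real.sqrt (2 * t * ε) / c * Real.exp (-δ / ε))
        (𝓝[>] 0) (𝓝 0) := by
      have h1 : Tendsto (fun ε : ℝ => Real.sqrt (2 * t * ε) / c) (𝓝[>] 0) (𝓝 0) := by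
        have : ContinuousAt (fun ε : ℝ => Real.sqrt (2 * t * ε) / c) 0 := by
          fun_prop (disch := positivity)
        have h0 : Real.sqrt (2 * t * 0) / c = 0 := by simp
        simpa [h0] using (this.continuousWithinAt (s := Set.Ioi 0)).tendsto
      have h2 : Tendsto (fun ε : ℝ => Real.exp (-δ / ε)) (𝓝[>] 0) (𝓝 0) := by
        apply Real.tendsto_exp_atBot.comp
        have := tendsto_inv_nhdsGT_zero (𝕜 := ℝ)
        have h3 : Tendsto (fun ε : ℝ => δ * ε⁻¹) (𝓝[>] 0) atTop :=
          this.const_mul_atTop hδ0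
        have h4 := tendsto_neg_atTop_atBot.comp h3
        apply h4.congr
        intro ε
        simp [neg_div, div_eq_mul_inv, Function.comp]
      simpa using h1.mul h2
    have hlb : ∀ᶠ ε in 𝓝[>] (0:ℝ),
        (0:ℝ) ≤ erfc (c / Real.sqrt (2 * t * ε)) * Real.exp (-u_a / ε) := by
      filter_upwards with ε
      exact mul_nonneg (erfc_nonneg _) (Real.exp_nonneg _)
    exact tendsto_of_tendsto_of_tendsto_of_le_of_le' tendsto_const_nhds hg hlb hub
  · intro h
    have hclt : c ^ 2 < -2 * u_a * t := by
      have : c < Real.sqrt (-2 * u_a * t) := by rw [hc]; linarith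
      exact (Real.lt_sqrt hc0.le).1 this
    set δ : ℝ := -u_a - c ^ 2 / (2 * t) with hδ
    have hδ0 : 0 < δ := by
      rw [hδ]
      have : c ^ 2 / (2 * t) < -u_a := by
        rw [div_lt_iff₀ (by linarith)]
        nlinarith
      linarith
    set B : ℝ := 2 * c / Real.sqrt (2 * t) with hB
    have hB0 : 0 < B := by rw [hB]; positivity
    -- lower bound: f ε ≥ exp (δ/ε - B/√ε - 1)
    have hlb : ∀ᶠ ε in 𝓝[>] (0:ℝ),
        Real.exp (δ / ε - B / Real.sqrt ε - 1)
          ≤ erfc (c / Real.sqrt (2 * t * ε)) * Real.exp (-u_a / ε) := by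
      filter_upwards [self_mem_nhdsWithin] with ε hε
      have hε : 0 < ε := hε
      set z : ℝ := c / Real.sqrt (2 * t * ε) with hz
      have hz0 : 0 < z := hzpos ε hε
      have h1 := erfc_ge z hz0.le
      have h2 : Real.exp (-(z + 1) ^ 2) * Real.exp (-u_a / ε)
          ≤ erfc z * Real.exp (-u_a / ε) :=
        mul_le_mul_of_nonneg_right h1 (Real.exp_nonneg _)
      refine le_trans (le_of_eq ?_) h2
      rw [← Real.exp_add]
      congr 1
      have hzsq' : z ^ 2 = c ^ 2 / (2 * t * ε) := hzsq ε hε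
      have h2z : 2 * z = B / Real.sqrt ε := by
        rw [hz, hB]
        rw [show (2:ℝ) * t * ε = (2 * t) * ε by ring, Real.sqrt_mul (by positivity)]
        have h1 : Real.sqrt (2 * t) ≠ 0 := by positivity
        have h2 : Real.sqrt ε ≠ 0 := by positivity
        field_simp
        try ring
      have hexp : -(z + 1) ^ 2 = -z ^ 2 - 2 * z - 1 := by ring
      rw [hexp, hzsq', h2z, hδ]
      have hε' : ε ≠ 0 := hε.ne'
      have ht' : (2:ℝ) * t ≠ 0 := by positivity
      field_simp
      try ring
    -- the exponent tends to atTop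
    have hE : Tendsto (fun ε : ℝ => Real.exp (δ / ε - B / Real.sqrt ε - 1)) (𝓝[>] 0) atTop := by
      apply Real.tendsto_exp_atTop.comp
      have hmono : ∀ᶠ ε in 𝓝[>] (0:ℝ),
          δ / (2 * ε) - 1 ≤ δ / ε - B / Real.sqrt ε - 1 := by
        have hr : (0:ℝ) < (δ / (2 * B)) ^ 2 := by positivity
        filter_upwards [Ioo_mem_nhdsGT_of_mem ⟨le_refl 0, hr⟩] with ε hε
        obtain ⟨hε0, hεr⟩ := hε
        have hsε : 0 < Real.sqrt ε := Real.sqrt_pos.2 hε0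
        have hsle : Real.sqrt ε ≤ δ / (2 * B) := by
          have := Real.sqrt_le_sqrt hεr.le
          rwa [Real.sqrt_sq (by positivity)] at this
        have hkey : B / Real.sqrt ε ≤ δ / (2 * ε) := by
          rw [div_le_div_iff₀ hsε (by positivity)]
          have h1 : B * Real.sqrt ε ≤ δ / 2 := by
            have hBne : B ≠ 0 := hB0.ne'
            calc B * Real.sqrt ε ≤ B * (δ / (2 * B)) :=
                  mul_le_mul_of_nonneg_left hsle hB0.le
              _ = δ / 2 := by field_simp
          calc B * (2 * ε) = (B * Real.sqrt ε) * (2 * Real.sqrt ε) := by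
                rw [show B * Real.sqrt ε * (2 * Real.sqrt ε) = 2 * B * (Real.sqrt ε * Real.sqrt ε) by ring,
                  Real.mul_self_sqrt hε0.le]; ring
            _ ≤ (δ / 2) * (2 * Real.sqrt ε) := by
                apply mul_le_mul_of_nonneg_right h1 (by positivity)
            _ = δ * Real.sqrt ε := by ring
        have hsplit : δ / ε = δ / (2 * ε) + δ / (2 * ε) := by
          field_simp; ring
        linarith
      have hbase : Tendsto (fun ε : ℝ => δ / (2 * ε) - 1) (𝓝[>] 0) atTop := by
        apply tendsto_atTop_add_const_right
        have := tendsto_inv_nhdsGT_zero (𝕜 := ℝ)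
        have h3 : Tendsto (fun ε : ℝ => (δ / 2) * ε⁻¹) (𝓝[>] 0) atTop :=
          this.const_mul_atTop (by positivity)
        apply h3.congr
        intro ε
        show δ / 2 * ε⁻¹ = δ / (2 * ε)
        rw [div_eq_mul_inv, mul_assoc, ← mul_inv, ← div_eq_mul_inv]
      exact tendsto_atTop_mono' _ hmono hbase
    exact tendsto_atTop_mono' _ hlb hE
end

section
/- Assume u_a < 0 and u_b > 0. For every t > 0 and every x with a + u_a t < x < a, the approximate velocity u^ε(x,t) tends to (x−a)/t and the approximate potential density R^ε(x,t) tends to ρ_c·(2·(x − a − u_a t)·(x − a) + (a−c)·u_a t)/(u_a t) as ε → 0⁺. -/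
open Real Filter Topology

section auxiliary

open MeasureTheory Set

/-- The unnormalized complementary error function (auxiliary copy used below). -/
noncomputable def erfcAux (z : ℝ) : ℝ := ∫ s in Set.Ioi z, Real.exp (-s ^ 2)

lemma integrable_exp_neg_sq' : Integrable (fun s : ℝ => Real.exp (-s ^ 2)) := by
  have := integrable_exp_neg_mul_sq (b := 1) one_pos
  simpa using this

lemma erfcAux_nonneg (z : ℝ) : 0 ≤ erfcAux z :=
  setIntegral_nonneg measurableSet_Ioi fun s _ => (Real.exp_pos _).le

lemma erfcAux_add_neg (z : ℝ) : erfcAux z + erfcAux (-z) = Real.sqrt π := by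
  have h1 : erfcAux (-z) = ∫ s in Iic z, Real.exp (-s ^ 2) := by
    rw [erfcAux, ← integral_comp_neg_Iic]
    simp
  have h2 : (∫ s : ℝ, Real.exp (-s ^ 2)) = Real.sqrt π := by
    have := integral_gaussian 1
    simpa using this
  rw [h1, erfcAux, add_comm, intervalIntegral.integral_Iic_add_Ioi
    (integrable_exp_neg_sq'.integrableOn) (integrable_exp_neg_sq'.integrableOn), h2]

lemma tendsto_exp_neg_sq_atTop : Tendsto (fun s : ℝ => Real.exp (-s ^ 2)) atTop (𝓝 0) := by
  apply Real.tendsto_exp_atBot.comp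
  apply tendsto_neg_atBot_iff.mpr
  exact tendsto_pow_atTop two_ne_zero

lemma erfcAux_le_upper {z : ℝ} (hz : 0 < z) : erfcAux z ≤ Real.exp (-z ^ 2) / (2 * z) := by
  set G : ℝ → ℝ := fun s => Real.exp (-s ^ 2) * (2 * s)⁻¹ with hG
  set G' : ℝ → ℝ := fun s => -(Real.exp (-s ^ 2) * (1 + (2 * s ^ 2)⁻¹)) with hG'
  have hderiv : ∀ s ∈ Ici z, HasDerivAt G (G' s) s := by
    intro s hs
    have hs0 : (0:ℝ) < s := lt_of_lt_of_le hz hs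
    have h1 : HasDerivAt (fun s : ℝ => -s ^ 2) (-(2 * s)) s := by
      simpa using (hasDerivAt_pow 2 s).fun_neg
    have h2 := h1.exp
    have h3 : HasDerivAt (fun s : ℝ => (2 * s)⁻¹) (-2 / (2 * s) ^ 2) s := by
      have h4 : HasDerivAt (fun s : ℝ => 2 * s) 2 s := by
        simpa using (hasDerivAt_id s).const_mul (2:ℝ)
      exact h4.inv (by positivity)
    have h5 := h2.fun_mul h3
    refine h5.congr_deriv ?_
    rw [hG']
    field_simp
    ring
  have hG'int : IntegrableOn G' (Ioi z) := by
    have hbound : Integrable (fun s : ℝ => (1 + (2 * z ^ 2)⁻¹) * Real.exp (-s ^ 2)) :=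
      integrable_exp_neg_sq'.const_mul _
    apply Integrable.mono' hbound.integrableOn
    · apply ContinuousOn.aestronglyMeasurable _ measurableSet_Ioi
      apply ContinuousOn.neg
      apply ContinuousOn.mul (Continuous.continuousOn (by continuity))
      apply ContinuousOn.add continuousOn_const
      apply ContinuousOn.inv₀ (Continuous.continuousOn (by continuity))
      intro s hs
      have : (0:ℝ) < s := lt_trans hz hs
      positivity
    · filter_upwards [ae_restrict_mem measurableSet_Ioi] with s hs
      have hsz : z < s := hs
      have hs0 : (0:ℝ) < s := lt_trans hz hsz
      rw [hG']
      rw [norm_neg, norm_mul, Real.norm_eq_abs, Real.norm_eq_abs,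
        abs_of_pos (Real.exp_pos _), abs_of_pos (by positivity)]
      rw [mul_comm]
      apply mul_le_mul_of_nonneg_right _ (Real.exp_pos _).le
      have : (2 * s ^ 2)⁻¹ ≤ (2 * z ^ 2)⁻¹ := by
        apply inv_anti₀ (by positivity)
        nlinarith
      linarith
  have htend : Tendsto G atTop (𝓝 0) := by
    have h1 : Tendsto (fun s : ℝ => (2 * s)⁻¹) atTop (𝓝 0) := by
      apply Tendsto.inv_tendsto_atTop
      exact (tendsto_id.const_mul_atTop two_pos)
    have := tendsto_exp_neg_sq_atTop.mul h1
    rw [hG]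
    simpa using this
  have hftc : ∫ s in Ioi z, G' s = 0 - G z :=
    integral_Ioi_of_hasDerivAt_of_tendsto' hderiv hG'int htend
  have hmono : erfcAux z ≤ ∫ s in Ioi z, -G' s := by
    apply setIntegral_mono_on integrable_exp_neg_sq'.integrableOn hG'int.neg measurableSet_Ioi
    intro s hs
    have hs0 : (0:ℝ) < s := lt_trans hz hs
    show Real.exp (-s ^ 2) ≤ -G' s
    rw [hG']
    have h1 : (0:ℝ) ≤ (2 * s ^ 2)⁻¹ := by positivity
    nlinarith [Real.exp_pos (-s ^ 2)]
  rw [integral_neg, hftc] at hmono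
  calc erfcAux z ≤ -(0 - G z) := hmono
    _ = Real.exp (-z ^ 2) / (2 * z) := by rw [hG]; field_simp; ring

lemma erfcAux_ge_lower {z : ℝ} (hz : 0 < z) :
    Real.exp (-z ^ 2) * ((2 * z)⁻¹ - (4 * z ^ 3)⁻¹) ≤ erfcAux z := by
  set H : ℝ → ℝ := fun s => Real.exp (-s ^ 2) * ((2 * s)⁻¹ - (4 * s ^ 3)⁻¹) with hH
  set H' : ℝ → ℝ := fun s => Real.exp (-s ^ 2) * (3 * (4 * s ^ 4)⁻¹ - 1) with hH'
  have hderiv : ∀ s ∈ Ici z, HasDerivAt H (H' s) s := by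
    intro s hs
    have hs0 : (0:ℝ) < s := lt_of_lt_of_le hz hs
    have h1 : HasDerivAt (fun s : ℝ => -s ^ 2) (-(2 * s)) s := by
      simpa using (hasDerivAt_pow 2 s).fun_neg
    have h2 := h1.exp
    have h3 : HasDerivAt (fun s : ℝ => (2 * s)⁻¹) (-2 / (2 * s) ^ 2) s := by
      have h4 : HasDerivAt (fun s : ℝ => 2 * s) 2 s := by
        simpa using (hasDerivAt_id s).const_mul (2:ℝ)
      exact h4.inv (by positivity)
    have h5 : HasDerivAt (fun s : ℝ => (4 * s ^ 3)⁻¹) (-(4 * (3 * s ^ 2)) / (4 * s ^ 3) ^ 2) s := by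
      have h6 : HasDerivAt (fun s : ℝ => 4 * s ^ 3) (4 * (3 * s ^ 2)) s := by
        simpa using (hasDerivAt_pow 3 s).const_mul (4:ℝ)
      exact h6.inv (by positivity)
    have h7 := h2.fun_mul (h3.fun_sub h5)
    refine h7.congr_deriv ?_
    rw [hH']
    field_simp
    ring
  have hH'int : IntegrableOn H' (Ioi z) := by
    have hbound : Integrable (fun s : ℝ => (3 * (4 * z ^ 4)⁻¹ + 1) * Real.exp (-s ^ 2)) :=
      integrable_exp_neg_sq'.const_mul _
    apply Integrable.mono' hbound.integrableOn
    · apply ContinuousOn.aestronglyMeasurable _ measurableSet_Ioi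
      apply ContinuousOn.mul (Continuous.continuousOn (by continuity))
      apply ContinuousOn.sub _ continuousOn_const
      apply ContinuousOn.mul continuousOn_const
      apply ContinuousOn.inv₀ (Continuous.continuousOn (by continuity))
      intro s hs
      have : (0:ℝ) < s := lt_trans hz hs
      positivity
    · filter_upwards [ae_restrict_mem measurableSet_Ioi] with s hs
      have hsz : z < s := hs
      have hs0 : (0:ℝ) < s := lt_trans hz hsz
      rw [hH', norm_mul, Real.norm_eq_abs, Real.norm_eq_abs, abs_of_pos (Real.exp_pos _),
        mul_comm]
      apply mul_le_mul_of_nonneg_right _ (Real.exp_pos _).le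
      have hle : (4 * s ^ 4)⁻¹ ≤ (4 * z ^ 4)⁻¹ := by
        apply inv_anti₀ (by positivity)
        have := pow_le_pow_left₀ hz.le hsz.le 4
        linarith
      have h0 : (0:ℝ) ≤ 3 * (4 * s ^ 4)⁻¹ := by positivity
      rw [abs_le]
      constructor <;> nlinarith
  have htend : Tendsto H atTop (𝓝 0) := by
    have h1 : Tendsto (fun s : ℝ => (2 * s)⁻¹ - (4 * s ^ 3)⁻¹) atTop (𝓝 (0 - 0)) := by
      apply Tendsto.sub
      · exact Tendsto.inv_tendsto_atTop (tendsto_id.const_mul_atTop two_pos)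
      · exact Tendsto.inv_tendsto_atTop ((tendsto_pow_atTop three_ne_zero).const_mul_atTop
          four_pos)
    have := tendsto_exp_neg_sq_atTop.mul h1
    rw [hH]
    simpa using this
  have hftc : ∫ s in Ioi z, H' s = 0 - H z :=
    integral_Ioi_of_hasDerivAt_of_tendsto' hderiv hH'int htend
  have hmono : ∫ s in Ioi z, -H' s ≤ erfcAux z := by
    apply setIntegral_mono_on hH'int.neg integrable_exp_neg_sq'.integrableOn measurableSet_Ioi
    intro s hs
    have hs0 : (0:ℝ) < s := lt_trans hz hs
    show -H' s ≤ Real.exp (-s ^ 2)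
    rw [hH']
    have h1 : (0:ℝ) ≤ 3 * (4 * s ^ 4)⁻¹ := by positivity
    nlinarith [Real.exp_pos (-s ^ 2)]
  rw [integral_neg, hftc] at hmono
  have : H z = Real.exp (-z ^ 2) * ((2 * z)⁻¹ - (4 * z ^ 3)⁻¹) := rfl
  linarith [hmono]

lemma tendsto_mul_exp_erfcAux :
    Tendsto (fun z : ℝ => z * Real.exp (z ^ 2) * erfcAux z) atTop (𝓝 (1/2)) := by
  have hlow : Tendsto (fun z : ℝ => 1/2 - (4 * z ^ 2)⁻¹) atTop (𝓝 (1/2)) := by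
    have : Tendsto (fun z : ℝ => (4 * z ^ 2)⁻¹) atTop (𝓝 0) :=
      Tendsto.inv_tendsto_atTop ((tendsto_pow_atTop two_ne_zero).const_mul_atTop four_pos)
    simpa using (tendsto_const_nhds (x := (1:ℝ)/2)).sub this
  apply tendsto_of_tendsto_of_tendsto_of_le_of_le' hlow tendsto_const_nhds
  · filter_upwards [eventually_gt_atTop (0:ℝ)] with z hz
    have h := erfcAux_ge_lower hz
    have he : Real.exp (z ^ 2) * Real.exp (-z ^ 2) = 1 := by
      rw [← Real.exp_add]; simp
    have h2 : z * Real.exp (z ^ 2) * (Real.exp (-z ^ 2) * ((2 * z)⁻¹ - (4 * z ^ 3)⁻¹))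
        ≤ z * Real.exp (z ^ 2) * erfcAux z := by
      apply mul_le_mul_of_nonneg_left h (by positivity)
    calc 1/2 - (4 * z ^ 2)⁻¹
        = z * Real.exp (z ^ 2) * (Real.exp (-z ^ 2) * ((2 * z)⁻¹ - (4 * z ^ 3)⁻¹)) := by
          rw [show z * Real.exp (z ^ 2) * (Real.exp (-z ^ 2) * ((2 * z)⁻¹ - (4 * z ^ 3)⁻¹))
            = Real.exp (z ^ 2) * Real.exp (-z ^ 2) * (z * ((2 * z)⁻¹ - (4 * z ^ 3)⁻¹)) by ring,
            he, one_mul]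
          field_simp
      _ ≤ z * Real.exp (z ^ 2) * erfcAux z := h2
  · filter_upwards [eventually_gt_atTop (0:ℝ)] with z hz
    have h := erfcAux_le_upper hz
    have he : Real.exp (z ^ 2) * Real.exp (-z ^ 2) = 1 := by
      rw [← Real.exp_add]; simp
    calc z * Real.exp (z ^ 2) * erfcAux z
        ≤ z * Real.exp (z ^ 2) * (Real.exp (-z ^ 2) / (2 * z)) :=
          mul_le_mul_of_nonneg_left h (by positivity)
      _ = 1/2 := by
          rw [show z * Real.exp (z ^ 2) * (Real.exp (-z ^ 2) / (2 * z))
            = Real.exp (z ^ 2) * Real.exp (-z ^ 2) * (z / (2 * z)) by ring, he, one_mul]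
          field_simp

lemma lemA' {k : ℝ} (hk : 0 < k) :
    Tendsto (fun M : ℝ => M * Real.exp (k ^ 2 * M ^ 2) * erfcAux (k * M)) atTop
      (𝓝 (1 / (2 * k))) := by
  have hcomp : Tendsto (fun M : ℝ => k * M) atTop atTop := tendsto_id.const_mul_atTop hk
  have h1 := tendsto_mul_exp_erfcAux.comp hcomp
  have h2 := h1.const_mul (k⁻¹)
  have hval : k⁻¹ * (1/2) = 1 / (2 * k) := by field_simp
  rw [hval] at h2
  apply h2.congr
  intro M
  simp only [Function.comp_apply]
  rw [show (k * M) ^ 2 = k ^ 2 * M ^ 2 by ring]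
  field_simp

lemma lemC' {c : ℝ} (hc : c < 0) :
    Tendsto (fun M : ℝ => Real.exp (c * M ^ 2)) atTop (𝓝 0) := by
  apply Real.tendsto_exp_atBot.comp
  have h1 : Tendsto (fun M : ℝ => M ^ 2) atTop atTop := tendsto_pow_atTop two_ne_zero
  have := h1.const_mul_atTop_of_neg hc
  simpa using this

lemma lemB' {k r : ℝ} (hk : 0 < k) (hr : r < k ^ 2) :
    Tendsto (fun M : ℝ => M * Real.exp (r * M ^ 2) * erfcAux (k * M)) atTop (𝓝 0) := by
  have hup : Tendsto (fun M : ℝ => (2 * k)⁻¹ * Real.exp ((r - k ^ 2) * M ^ 2)) atTop (𝓝 0) := by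
    simpa using (lemC' (by linarith)).const_mul ((2 * k)⁻¹)
  apply tendsto_of_tendsto_of_tendsto_of_le_of_le' tendsto_const_nhds hup
  · filter_upwards [eventually_gt_atTop (0:ℝ)] with M hM
    have := erfcAux_nonneg (k * M)
    positivity
  · filter_upwards [eventually_gt_atTop (0:ℝ)] with M hM
    have h := erfcAux_le_upper (mul_pos hk hM)
    calc M * Real.exp (r * M ^ 2) * erfcAux (k * M)
        ≤ M * Real.exp (r * M ^ 2) * (Real.exp (-(k * M) ^ 2) / (2 * (k * M))) := by
          apply mul_le_mul_of_nonneg_left h (by positivity)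
      _ = (2 * k)⁻¹ * (Real.exp (r * M ^ 2) * Real.exp (-(k ^ 2 * M ^ 2))) := by
          rw [show -(k * M) ^ 2 = -(k ^ 2 * M ^ 2) by ring]
          field_simp
      _ = (2 * k)⁻¹ * Real.exp ((r - k ^ 2) * M ^ 2) := by
          rw [← Real.exp_add]; ring_nf

lemma erfcAux_neg_eq (z : ℝ) : erfcAux (-z) = Real.sqrt π - erfcAux z := by
  have := erfcAux_add_neg z
  linarith

lemma exp_mul_exp' {A B C : ℝ} (h : A + B = C) : Real.exp A * Real.exp B = Real.exp C := by
  rw [← Real.exp_add, h]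

lemma tendsto_m_atTop' {t : ℝ} (ht : 0 < t) :
    Tendsto (fun ε : ℝ => (Real.sqrt (2 * t * ε))⁻¹) (𝓝[>] (0:ℝ)) atTop := by
  apply tendsto_inv_nhdsGT_zero.comp
  rw [tendsto_nhdsWithin_iff]
  constructor
  · have hc : Continuous (fun ε : ℝ => Real.sqrt (2 * t * ε)) :=
      (continuous_const.mul continuous_id).sqrt
    have := hc.tendsto 0
    simp only [mul_zero, Real.sqrt_zero] at this
    exact this.mono_left nhdsWithin_le_nhds
  · filter_upwards [self_mem_nhdsWithin] with ε hε
    have : (0:ℝ) < ε := hε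
    exact Real.sqrt_pos.mpr (by positivity)

end auxiliary

lemma erfc_eq_aux : erfc = erfcAux := rfl

/-- The denominator `D(x,t,ε)` appearing in the Hopf–Cole formulas. -/
noncomputable def D (a b u_a u_b x t ε : ℝ) : ℝ :=
  erfc ((x - a - u_a * t) / Real.sqrt (2 * t * ε))
      * Real.exp (((x - a - u_a * t) ^ 2 - (x - a) ^ 2) / (2 * t * ε))
    + erfc ((x - b) / Real.sqrt (2 * t * ε))
    - erfc ((x - a) / Real.sqrt (2 * t * ε))
    + erfc (-(x - b) / Real.sqrt (2 * t * ε)) * Real.exp (-u_b / ε)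

/-- The approximate velocity `u^ε(x,t)`. -/
noncomputable def uEps (a b u_a u_b x t ε : ℝ) : ℝ :=
  (u_a * erfc ((x - a - u_a * t) / Real.sqrt (2 * t * ε))
        * Real.exp (((x - a - u_a * t) ^ 2 - (x - a) ^ 2) / (2 * t * ε))
      + ε / Real.sqrt (2 * t * ε) * Real.exp (-(x - b) ^ 2 / (2 * t * ε))
          * (1 - Real.exp (-u_b / ε)))
    / D a b u_a u_b x t ε

/-- The approximate potential density `R^ε(x,t)`. -/
noncomputable def REps (a b c d u_a u_b ρ_c ρ_d x t ε : ℝ) : ℝ :=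
  (t * ε / Real.sqrt (2 * t * ε) * ρ_c * Real.exp (-(x - a) ^ 2 / (2 * t * ε))
      + ρ_c * (x - c - u_a * t)
          * Real.exp (((x - a - u_a * t) ^ 2 - (x - a) ^ 2) / (2 * t * ε))
          * erfc ((x - a - u_a * t) / Real.sqrt (2 * t * ε))
      + t * ε / Real.sqrt (2 * t * ε) * ρ_c
          * (Real.exp (-(x - a) ^ 2 / (2 * t * ε)) - Real.exp (-(x - c) ^ 2 / (2 * t * ε)))
      + ρ_c * (x - c)
          * (erfc ((x - c) / Real.sqrt (2 * t * ε)) - erfc ((x - a) / Real.sqrt (2 * t * ε)))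
      + ρ_d * Real.exp (-u_b / ε) * erfc (-(x - d) / Real.sqrt (2 * t * ε)))
    / D a b u_a u_b x t ε

/-- Case `u_a < 0`, `u_b > 0`, region `a + u_a·t < x < a`: as `ε → 0⁺`, the approximate
velocity tends to `(x−a)/t` and the approximate potential density tends to
`ρ_c·(2·(x − a − u_a·t)·(x − a) + (a−c)·u_a·t)/(u_a·t)`. -/
theorem vanishing_viscosity_limit_in_rarefaction
    (a b c d u_a u_b ρ_c ρ_d : ℝ) (hac : a < c) (hcb : c < b) (hbd : b < d)
    (hua : u_a < 0) (hub : 0 < u_b) (t x : ℝ) (ht : 0 < t)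
    (hx1 : a + u_a * t < x) (hx2 : x < a) :
    Tendsto (fun ε : ℝ => uEps a b u_a u_b x t ε) (𝓝[>] 0) (𝓝 ((x - a) / t))
    ∧ Tendsto (fun ε : ℝ => REps a b c d u_a u_b ρ_c ρ_d x t ε) (𝓝[>] 0)
        (𝓝 (ρ_c * (2 * (x - a - u_a * t) * (x - a) + (a - c) * u_a * t) / (u_a * t))) := by
  have lemA : ∀ {k : ℝ}, 0 < k →
      Tendsto (fun M : ℝ => M * Real.exp (k ^ 2 * M ^ 2) * erfc (k * M)) atTop
        (𝓝 (1 / (2 * k))) := fun hk => lemA' hk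
  have lemB : ∀ {k r : ℝ}, 0 < k → r < k ^ 2 →
      Tendsto (fun M : ℝ => M * Real.exp (r * M ^ 2) * erfc (k * M)) atTop (𝓝 0) :=
    fun hk hr => lemB' hk hr
  have erfc_neg_eq : ∀ z : ℝ, erfc (-z) = Real.sqrt π - erfc z := erfcAux_neg_eq
  have hp : 0 < x - a - u_a * t := by linarith
  have hq : 0 < a - x := by linarith
  have hbx : (0:ℝ) < b - x := by linarith
  have hcx : (0:ℝ) < c - x := by linarith
  have hdx : (0:ℝ) < d - x := by linarith
  have hqb : (a - x) ^ 2 < (b - x) ^ 2 := by nlinarith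
  have hqc : (a - x) ^ 2 < (c - x) ^ 2 := by nlinarith
  have hqd : (a - x) ^ 2 < (d - x) ^ 2 := by nlinarith
  have htu : (0:ℝ) < 2 * t * u_b := by positivity
  have hm := tendsto_m_atTop' (t := t) ht
  -- the normalizing factor
  set φ : ℝ → ℝ := fun ε =>
    (Real.sqrt (2 * t * ε))⁻¹
      * Real.exp ((a - x) ^ 2 * ((Real.sqrt (2 * t * ε))⁻¹) ^ 2) with hφdef
  have hφne : ∀ ε ∈ Set.Ioi (0:ℝ), φ ε ≠ 0 := by
    intro ε hε
    have hε' : (0:ℝ) < ε := hε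
    have hs : (0:ℝ) < Real.sqrt (2 * t * ε) := Real.sqrt_pos.mpr (by positivity)
    rw [hφdef]
    have := Real.exp_pos ((a - x) ^ 2 * ((Real.sqrt (2 * t * ε))⁻¹) ^ 2)
    positivity
  -- limit of the normalized denominator
  have hD : Tendsto (fun ε : ℝ => D a b u_a u_b x t ε * φ ε) (𝓝[>] (0:ℝ))
      (𝓝 (1 / (2 * (x - a - u_a * t)) + 1 / (2 * (a - x)))) := by
    have hGD : Tendsto (fun M : ℝ =>
        M * Real.exp ((x - a - u_a * t) ^ 2 * M ^ 2) * erfc ((x - a - u_a * t) * M)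
        + (M * Real.exp ((a - x) ^ 2 * M ^ 2) * erfc ((a - x) * M)
            - M * Real.exp ((a - x) ^ 2 * M ^ 2) * erfc ((b - x) * M))
        + M * Real.exp (((a - x) ^ 2 - 2 * t * u_b) * M ^ 2) * erfc ((b - x) * M)) atTop
        (𝓝 (1 / (2 * (x - a - u_a * t)) + 1 / (2 * (a - x)))) := by
      have h1 := ((lemA hp).add ((lemA hq).sub (lemB hbx hqb))).add
        (lemB hbx (by nlinarith : (a - x) ^ 2 - 2 * t * u_b < (b - x) ^ 2))
      simpa using h1
    apply Tendsto.congr' _ (hGD.comp hm)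
    filter_upwards [self_mem_nhdsWithin] with ε hε
    have hε : (0:ℝ) < ε := hε
    simp only [Function.comp_apply]
    rw [D, hφdef]
    set s : ℝ := Real.sqrt (2 * t * ε) with hsdef
    have hs : 0 < s := Real.sqrt_pos.mpr (by positivity)
    have hs2 : s ^ 2 = 2 * t * ε := Real.sq_sqrt (by positivity)
    have hM2 : (s⁻¹) ^ 2 = (2 * t * ε)⁻¹ := by rw [inv_pow, hs2]
    rw [show (x - a - u_a * t) / s = (x - a - u_a * t) * s⁻¹ from div_eq_mul_inv _ _,
        show (x - b) / s = -((b - x) * s⁻¹) by rw [div_eq_mul_inv]; ring,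
        show (x - a) / s = -((a - x) * s⁻¹) by rw [div_eq_mul_inv]; ring,
        show -(x - b) / s = (b - x) * s⁻¹ by rw [div_eq_mul_inv]; ring,
        erfc_neg_eq, erfc_neg_eq,
        show ((x - a - u_a * t) ^ 2 - (x - a) ^ 2) / (2 * t * ε)
          = ((x - a - u_a * t) ^ 2 - (a - x) ^ 2) * (s⁻¹) ^ 2 by
            rw [hM2, div_eq_mul_inv]; ring,
        show -u_b / ε = -(2 * t * u_b) * (s⁻¹) ^ 2 by
          rw [hM2, div_eq_mul_inv]; field_simp]
    have hE1 : Real.exp (((x - a - u_a * t) ^ 2 - (a - x) ^ 2) * (s⁻¹) ^ 2)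
        * Real.exp ((a - x) ^ 2 * (s⁻¹) ^ 2)
        = Real.exp ((x - a - u_a * t) ^ 2 * (s⁻¹) ^ 2) := exp_mul_exp' (by ring)
    have hE2 : Real.exp (-(2 * t * u_b) * (s⁻¹) ^ 2) * Real.exp ((a - x) ^ 2 * (s⁻¹) ^ 2)
        = Real.exp (((a - x) ^ 2 - 2 * t * u_b) * (s⁻¹) ^ 2) := exp_mul_exp' (by ring)
    linear_combination (-(erfc ((x - a - u_a * t) * s⁻¹) * s⁻¹)) * hE1
      + (-(erfc ((b - x) * s⁻¹) * s⁻¹)) * hE2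
  have hLD : (0:ℝ) < 1 / (2 * (x - a - u_a * t)) + 1 / (2 * (a - x)) := by positivity
  -- limit of the normalized numerator of uEps
  have hNu : Tendsto (fun ε : ℝ =>
      (u_a * erfc ((x - a - u_a * t) / Real.sqrt (2 * t * ε))
          * Real.exp (((x - a - u_a * t) ^ 2 - (x - a) ^ 2) / (2 * t * ε))
        + ε / Real.sqrt (2 * t * ε) * Real.exp (-(x - b) ^ 2 / (2 * t * ε))
            * (1 - Real.exp (-u_b / ε))) * φ ε) (𝓝[>] (0:ℝ))
      (𝓝 (u_a * (1 / (2 * (x - a - u_a * t))))) := by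
    have hGN : Tendsto (fun M : ℝ =>
        u_a * (M * Real.exp ((x - a - u_a * t) ^ 2 * M ^ 2) * erfc ((x - a - u_a * t) * M))
        + (2 * t)⁻¹ * Real.exp (((a - x) ^ 2 - (b - x) ^ 2) * M ^ 2)
            * (1 - Real.exp (-(2 * t * u_b) * M ^ 2))) atTop
        (𝓝 (u_a * (1 / (2 * (x - a - u_a * t))))) := by
      have h1 := ((lemA hp).const_mul u_a).add
        ((((lemC' (by linarith : (a - x) ^ 2 - (b - x) ^ 2 < 0)).const_mul
          ((2 * t)⁻¹))).mul ((tendsto_const_nhds (x := (1:ℝ))).sub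
            (lemC' (by linarith : -(2 * t * u_b) < 0))))
      simpa using h1
    apply Tendsto.congr' _ (hGN.comp hm)
    filter_upwards [self_mem_nhdsWithin] with ε hε
    have hε : (0:ℝ) < ε := hε
    simp only [Function.comp_apply]
    rw [hφdef]
    set s : ℝ := Real.sqrt (2 * t * ε) with hsdef
    have hs : 0 < s := Real.sqrt_pos.mpr (by positivity)
    have hs2 : s ^ 2 = 2 * t * ε := Real.sq_sqrt (by positivity)
    have hM2 : (s⁻¹) ^ 2 = (2 * t * ε)⁻¹ := by rw [inv_pow, hs2]
    have hinv : s⁻¹ * s⁻¹ = (2 * t * ε)⁻¹ := by rw [← hM2]; ring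
    rw [show (x - a - u_a * t) / s = (x - a - u_a * t) * s⁻¹ from div_eq_mul_inv _ _,
        show ((x - a - u_a * t) ^ 2 - (x - a) ^ 2) / (2 * t * ε)
          = ((x - a - u_a * t) ^ 2 - (a - x) ^ 2) * (s⁻¹) ^ 2 by
            rw [hM2, div_eq_mul_inv]; ring,
        show -(x - b) ^ 2 / (2 * t * ε) = -(b - x) ^ 2 * (s⁻¹) ^ 2 by
          rw [hM2, div_eq_mul_inv]; ring,
        show -u_b / ε = -(2 * t * u_b) * (s⁻¹) ^ 2 by
          rw [hM2, div_eq_mul_inv]; field_simp]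
    have hE1 : Real.exp (((x - a - u_a * t) ^ 2 - (a - x) ^ 2) * (s⁻¹) ^ 2)
        * Real.exp ((a - x) ^ 2 * (s⁻¹) ^ 2)
        = Real.exp ((x - a - u_a * t) ^ 2 * (s⁻¹) ^ 2) := exp_mul_exp' (by ring)
    have hE3 : Real.exp (-(b - x) ^ 2 * (s⁻¹) ^ 2) * Real.exp ((a - x) ^ 2 * (s⁻¹) ^ 2)
        = Real.exp (((a - x) ^ 2 - (b - x) ^ 2) * (s⁻¹) ^ 2) := exp_mul_exp' (by ring)
    have hε2 : ε / s * s⁻¹ = (2 * t)⁻¹ := by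
      rw [div_eq_mul_inv, mul_assoc, hinv]
      field_simp
    linear_combination (-(u_a * erfc ((x - a - u_a * t) * s⁻¹) * s⁻¹)) * hE1
      + (-(ε / s * s⁻¹ * (1 - Real.exp (-(2 * t * u_b) * (s⁻¹) ^ 2)))) * hE3
      + (-(Real.exp (((a - x) ^ 2 - (b - x) ^ 2) * (s⁻¹) ^ 2)
          * (1 - Real.exp (-(2 * t * u_b) * (s⁻¹) ^ 2)))) * hε2
  -- limit of the normalized numerator of REps
  have hNR : Tendsto (fun ε : ℝ =>
      (t * ε / Real.sqrt (2 * t * ε) * ρ_c * Real.exp (-(x - a) ^ 2 / (2 * t * ε))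
        + ρ_c * (x - c - u_a * t)
            * Real.exp (((x - a - u_a * t) ^ 2 - (x - a) ^ 2) / (2 * t * ε))
            * erfc ((x - a - u_a * t) / Real.sqrt (2 * t * ε))
        + t * ε / Real.sqrt (2 * t * ε) * ρ_c
            * (Real.exp (-(x - a) ^ 2 / (2 * t * ε)) - Real.exp (-(x - c) ^ 2 / (2 * t * ε)))
        + ρ_c * (x - c)
            * (erfc ((x - c) / Real.sqrt (2 * t * ε)) - erfc ((x - a) / Real.sqrt (2 * t * ε)))
        + ρ_d * Real.exp (-u_b / ε) * erfc (-(x - d) / Real.sqrt (2 * t * ε))) * φ ε)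
      (𝓝[>] (0:ℝ))
      (𝓝 (ρ_c * 2⁻¹ + ρ_c * (x - c - u_a * t) * (1 / (2 * (x - a - u_a * t)))
        + ρ_c * 2⁻¹ + ρ_c * (x - c) * (1 / (2 * (a - x))))) := by
    have hGR : Tendsto (fun M : ℝ =>
        ρ_c * 2⁻¹
        + ρ_c * (x - c - u_a * t)
            * (M * Real.exp ((x - a - u_a * t) ^ 2 * M ^ 2) * erfc ((x - a - u_a * t) * M))
        + ρ_c * 2⁻¹ * (1 - Real.exp (((a - x) ^ 2 - (c - x) ^ 2) * M ^ 2))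
        + ρ_c * (x - c)
            * (M * Real.exp ((a - x) ^ 2 * M ^ 2) * erfc ((a - x) * M)
              - M * Real.exp ((a - x) ^ 2 * M ^ 2) * erfc ((c - x) * M))
        + ρ_d * (M * Real.exp (((a - x) ^ 2 - 2 * t * u_b) * M ^ 2) * erfc ((d - x) * M)))
        atTop
        (𝓝 (ρ_c * 2⁻¹ + ρ_c * (x - c - u_a * t) * (1 / (2 * (x - a - u_a * t)))
          + ρ_c * 2⁻¹ + ρ_c * (x - c) * (1 / (2 * (a - x))))) := by
      have h1 := ((((tendsto_const_nhds (x := ρ_c * 2⁻¹)).add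
        (((lemA hp).const_mul (ρ_c * (x - c - u_a * t))))).add
        (((tendsto_const_nhds (x := (1:ℝ))).sub
          (lemC' (by linarith : (a - x) ^ 2 - (c - x) ^ 2 < 0))).const_mul (ρ_c * 2⁻¹))).add
        (((lemA hq).sub (lemB hcx hqc)).const_mul (ρ_c * (x - c)))).add
        ((lemB hdx (by nlinarith : (a - x) ^ 2 - 2 * t * u_b < (d - x) ^ 2)).const_mul ρ_d)
      have h2 : ρ_c * 2⁻¹ + ρ_c * (x - c - u_a * t) * (1 / (2 * (x - a - u_a * t)))
          + ρ_c * 2⁻¹ * (1 - 0) + ρ_c * (x - c) * (1 / (2 * (a - x)) - 0) + ρ_d * 0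
          = ρ_c * 2⁻¹ + ρ_c * (x - c - u_a * t) * (1 / (2 * (x - a - u_a * t)))
            + ρ_c * 2⁻¹ + ρ_c * (x - c) * (1 / (2 * (a - x))) := by ring
      rw [← h2]
      exact h1.congr (by intro M; ring)
    apply Tendsto.congr' _ (hGR.comp hm)
    filter_upwards [self_mem_nhdsWithin] with ε hε
    have hε : (0:ℝ) < ε := hε
    simp only [Function.comp_apply]
    rw [hφdef]
    set s : ℝ := Real.sqrt (2 * t * ε) with hsdef
    have hs : 0 < s := Real.sqrt_pos.mpr (by positivity)
    have hs2 : s ^ 2 = 2 * t * ε := Real.sq_sqrt (by positivity)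
    have hM2 : (s⁻¹) ^ 2 = (2 * t * ε)⁻¹ := by rw [inv_pow, hs2]
    have hinv : s⁻¹ * s⁻¹ = (2 * t * ε)⁻¹ := by rw [← hM2]; ring
    rw [show (x - a - u_a * t) / s = (x - a - u_a * t) * s⁻¹ from div_eq_mul_inv _ _,
        show (x - c) / s = -((c - x) * s⁻¹) by rw [div_eq_mul_inv]; ring,
        show (x - a) / s = -((a - x) * s⁻¹) by rw [div_eq_mul_inv]; ring,
        show -(x - d) / s = (d - x) * s⁻¹ by rw [div_eq_mul_inv]; ring,
        erfc_neg_eq, erfc_neg_eq,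
        show ((x - a - u_a * t) ^ 2 - (x - a) ^ 2) / (2 * t * ε)
          = ((x - a - u_a * t) ^ 2 - (a - x) ^ 2) * (s⁻¹) ^ 2 by
            rw [hM2, div_eq_mul_inv]; ring,
        show -(x - a) ^ 2 / (2 * t * ε) = -(a - x) ^ 2 * (s⁻¹) ^ 2 by
          rw [hM2, div_eq_mul_inv]; ring,
        show -(x - c) ^ 2 / (2 * t * ε) = -(c - x) ^ 2 * (s⁻¹) ^ 2 by
          rw [hM2, div_eq_mul_inv]; ring,
        show -u_b / ε = -(2 * t * u_b) * (s⁻¹) ^ 2 by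
          rw [hM2, div_eq_mul_inv]; field_simp]
    have hE1 : Real.exp (((x - a - u_a * t) ^ 2 - (a - x) ^ 2) * (s⁻¹) ^ 2)
        * Real.exp ((a - x) ^ 2 * (s⁻¹) ^ 2)
        = Real.exp ((x - a - u_a * t) ^ 2 * (s⁻¹) ^ 2) := exp_mul_exp' (by ring)
    have hE2 : Real.exp (-(2 * t * u_b) * (s⁻¹) ^ 2) * Real.exp ((a - x) ^ 2 * (s⁻¹) ^ 2)
        = Real.exp (((a - x) ^ 2 - 2 * t * u_b) * (s⁻¹) ^ 2) := exp_mul_exp' (by ring)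
    have hE4 : Real.exp (-(a - x) ^ 2 * (s⁻¹) ^ 2) * Real.exp ((a - x) ^ 2 * (s⁻¹) ^ 2)
        = 1 := by
      have := exp_mul_exp' (A := -(a - x) ^ 2 * (s⁻¹) ^ 2) (B := (a - x) ^ 2 * (s⁻¹) ^ 2)
        (C := 0) (by ring)
      rwa [Real.exp_zero] at this
    have hE5 : Real.exp (-(c - x) ^ 2 * (s⁻¹) ^ 2) * Real.exp ((a - x) ^ 2 * (s⁻¹) ^ 2)
        = Real.exp (((a - x) ^ 2 - (c - x) ^ 2) * (s⁻¹) ^ 2) := exp_mul_exp' (by ring)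
    have hts : t * ε / s * s⁻¹ = 2⁻¹ := by
      rw [div_eq_mul_inv, mul_assoc, hinv]
      field_simp
    linear_combination
      (-(ρ_c * (t * ε / s) * s⁻¹)) * hE4 + (-ρ_c) * hts
      + (-(ρ_c * (x - c - u_a * t) * erfc ((x - a - u_a * t) * s⁻¹) * s⁻¹)) * hE1
      + (-(ρ_c * (t * ε / s) * s⁻¹)) * hE4 + (ρ_c * (t * ε / s) * s⁻¹) * hE5
      + (-(ρ_c * (1 - Real.exp (((a - x) ^ 2 - (c - x) ^ 2) * (s⁻¹) ^ 2)))) * hts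
      + (-(ρ_d * erfc ((d - x) * s⁻¹) * s⁻¹)) * hE2
  -- assemble
  have hvalU : (u_a * (1 / (2 * (x - a - u_a * t))))
      / (1 / (2 * (x - a - u_a * t)) + 1 / (2 * (a - x))) = (x - a) / t := by
    rw [div_eq_div_iff (ne_of_gt hLD) ht.ne']
    field_simp
    ring
  have hvalR : (ρ_c * 2⁻¹ + ρ_c * (x - c - u_a * t) * (1 / (2 * (x - a - u_a * t)))
      + ρ_c * 2⁻¹ + ρ_c * (x - c) * (1 / (2 * (a - x))))
      / (1 / (2 * (x - a - u_a * t)) + 1 / (2 * (a - x)))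
      = ρ_c * (2 * (x - a - u_a * t) * (x - a) + (a - c) * u_a * t) / (u_a * t) := by
    rw [div_eq_div_iff (ne_of_gt hLD) (mul_ne_zero hua.ne ht.ne')]
    field_simp
    ring
  constructor
  · have hu := hNu.div hD (ne_of_gt hLD)
    rw [hvalU] at hu
    apply Tendsto.congr' _ hu
    filter_upwards [self_mem_nhdsWithin] with ε hε
    rw [uEps, ← mul_div_mul_right _ (D a b u_a u_b x t ε) (hφne ε hε)]
    rfl
  · have hr := hNR.div hD (ne_of_gt hLD)
    rw [hvalR] at hr
    apply Tendsto.congr' _ hr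
    filter_upwards [self_mem_nhdsWithin] with ε hε
    rw [REps, ← mul_div_mul_right _ (D a b u_a u_b x t ε) (hφne ε hε)]
    rfl
end
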